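/- Let η ∈ (0, 1) and let c ∈ (-1, 1) satisfy ∫_{-1}^{1} (v - c)/(1 - η · sgn(v - c)) dv < 0 (which holds exactly when c > c_*, the unique zero of this integral as a function of c). For λ ∈ [0, (1-η)/(1-c)), define g(λ) = ∫_{-1}^{1} (v - c) / ( 1 - η · sgn(v - c) - λ (v - c) ) dv; the denominator is strictly positive for all v ∈ (-1,1), v ≠ c, in this range of λ. Then g(0) < 0 and g(λ) → +∞ as λ → ((1-η)/(1-c))⁻, and consequently there exists a smallest λ_+ ∈ (0, (1-η)/(1-c)) with g(λ_+) = 0. -/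

import Mathlib

open Filter

section AuxDecay

private lemma aux_decay_deriv (A lam c x : ℝ) (hlam : lam ≠ 0) (hx : 0 < A - lam*(x-c)) :
    HasDerivAt (fun v => -((v-c)/lam) - (A/lam^2) * Real.log (A - lam*(v-c)))
      ((x-c)/(A - lam*(x-c))) x := by
  have h1 : HasDerivAt (fun v : ℝ => v - c) 1 x := (hasDerivAt_id x).sub_const c
  have h2 : HasDerivAt (fun v : ℝ => A - lam*(v-c)) (-lam) x := by
    simpa using (h1.const_mul lam).const_sub A
  have h3 := (h2.log hx.ne').const_mul (A/lam^2)
  have h4 := ((h1.div_const lam).neg).sub h3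
  refine h4.congr_deriv ?_
  have hne : A - lam*(x-c) ≠ 0 := hx.ne'
  field_simp
  ring

private lemma aux_decay_piece (A lam c a b : ℝ) (hlam : lam ≠ 0) (hab : a ≤ b)
    (hpos : ∀ x ∈ Set.Icc a b, 0 < A - lam*(x - c)) :
    ∫ v in a..b, (v-c)/(A - lam*(v-c)) =
      (-((b-c)/lam) - (A/lam^2) * Real.log (A - lam*(b-c)))
      - (-((a-c)/lam) - (A/lam^2) * Real.log (A - lam*(a-c))) := by
  have huIcc : Set.uIcc a b = Set.Icc a b := Set.uIcc_of_le hab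
  apply intervalIntegral.integral_eq_sub_of_hasDerivAt
  · intro x hx
    rw [huIcc] at hx
    exact aux_decay_deriv A lam c x hlam (hpos x hx)
  · apply ContinuousOn.intervalIntegrable
    apply ContinuousOn.div
    · fun_prop
    · fun_prop
    · intro x hx
      rw [huIcc] at hx
      exact (hpos x hx).ne'

private lemma aux_decay_algebra (w T lam : ℝ) (h1 : 0 < T - lam*w) (h2 : 0 < T - 0*w) :
    w/(T - lam*w) - w/(T - 0*w) = lam*w^2/((T - lam*w)*(T - 0*w)) := by
  have h1' := h1.ne'
  have h2' := h2.ne'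
  rw [div_sub_div _ _ h1' h2', div_eq_div_iff (by positivity) (by positivity)]
  ring

end AuxDecay

set_option maxHeartbeats 2000000 in
/-- Existence of the decay exponent `λ₊` ahead of the front: if
`∫_{-1}^1 (v-c)/(1 - η sgn(v-c)) dv < 0` (i.e. `c > c_*`), then the function
`g(λ) = ∫_{-1}^1 (v-c)/(1 - η sgn(v-c) - λ(v-c)) dv`, whose denominator stays
positive for `λ ∈ [0, (1-η)/(1-c))`, satisfies `g(0) < 0`, blows up to `+∞` as
`λ → ((1-η)/(1-c))⁻`, and admits a smallest zero `λ₊ ∈ (0, (1-η)/(1-c))`. -/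
theorem decay_exponent_exists_ahead_of_front
    (η c : ℝ) (hη : η ∈ Set.Ioo (0 : ℝ) 1) (hc : c ∈ Set.Ioo (-1 : ℝ) 1)
    (hflux : ∫ v in (-1 : ℝ)..1, (v - c) / (1 - η * Real.sign (v - c)) < 0)
    (g : ℝ → ℝ)
    (hg : ∀ lam, g lam =
      ∫ v in (-1 : ℝ)..1,
        (v - c) / (1 - η * Real.sign (v - c) - lam * (v - c))) :
    (∀ lam ∈ Set.Ico (0 : ℝ) ((1 - η) / (1 - c)),
      ∀ v ∈ Set.Ioo (-1 : ℝ) 1, v ≠ c →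
        0 < 1 - η * Real.sign (v - c) - lam * (v - c)) ∧
    g 0 < 0 ∧
    Tendsto g (nhdsWithin ((1 - η) / (1 - c)) (Set.Iio ((1 - η) / (1 - c))))
      atTop ∧
    ∃ lamp ∈ Set.Ioo (0 : ℝ) ((1 - η) / (1 - c)), g lamp = 0 ∧
      ∀ μ ∈ Set.Ioo (0 : ℝ) ((1 - η) / (1 - c)), g μ = 0 → lamp ≤ μ := by
  obtain ⟨hη0, hη1⟩ := hη
  obtain ⟨hcm, hcp⟩ := hc
  have h1c : (0:ℝ) < 1 - c := by linarith
  have h1c' : (0:ℝ) < 1 + c := by linarith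
  have h1η : (0:ℝ) < 1 - η := by linarith
  have h1η' : (0:ℝ) < 1 + η := by linarith
  have hL : 0 < (1 - η) / (1 - c) := div_pos h1η h1c
  set L := (1 - η) / (1 - c) with hLdef
  -- denominator positivity on the CLOSED interval
  have hposIcc : ∀ lam, 0 ≤ lam → lam < L → ∀ v ∈ Set.Icc (-1:ℝ) 1, v ≠ c →
      0 < 1 - η * Real.sign (v - c) - lam * (v - c) := by
    intro lam hl0 hlL v hv hvc
    rcases lt_or_gt_of_ne hvc with h | h
    · rw [Real.sign_of_neg (by linarith : v - c < 0)]
      nlinarith [mul_nonneg hl0 (by linarith : (0:ℝ) ≤ c - v)]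
    · rw [Real.sign_of_pos (by linarith : (0:ℝ) < v - c)]
      have hlt : lam * (1 - c) < 1 - η := (lt_div_iff₀ h1c).mp hlL
      nlinarith [mul_le_mul_of_nonneg_left (by linarith [hv.2] : v - c ≤ 1 - c) hl0]
  -- congruences on the two pieces
  have hcong1 : ∀ lam : ℝ, Set.EqOn
      (fun v => (v - c) / (1 - η * Real.sign (v - c) - lam * (v - c)))
      (fun v => (v - c) / (1 + η - lam * (v - c))) (Set.uIcc (-1:ℝ) c) := by
    intro lam v hv
    rw [Set.uIcc_of_le (by linarith)] at hv
    rcases eq_or_lt_of_le hv.2 with h | h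
    · simp [h]
    · show (v - c) / (1 - η * Real.sign (v-c) - lam*(v-c)) = (v-c)/(1+η - lam*(v-c))
      rw [Real.sign_of_neg (by linarith : v - c < 0)]
      ring_nf
  have hcong2 : ∀ lam : ℝ, Set.EqOn
      (fun v => (v - c) / (1 - η * Real.sign (v - c) - lam * (v - c)))
      (fun v => (v - c) / (1 - η - lam * (v - c))) (Set.uIcc c (1:ℝ)) := by
    intro lam v hv
    rw [Set.uIcc_of_le (by linarith)] at hv
    rcases eq_or_lt_of_le hv.1 with h | h
    · simp [← h]
    · show (v - c) / (1 - η * Real.sign (v-c) - lam*(v-c)) = (v-c)/(1-η - lam*(v-c))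
      rw [Real.sign_of_pos (by linarith : (0:ℝ) < v - c)]
      ring_nf
  -- positivity of piece denominators
  have hpos1 : ∀ lam : ℝ, 0 ≤ lam → ∀ x ∈ Set.Icc (-1:ℝ) c, 0 < 1 + η - lam * (x - c) := by
    intro lam hl0 x hx
    nlinarith [mul_nonneg hl0 (by linarith [hx.2] : (0:ℝ) ≤ c - x)]
  have hpos2 : ∀ lam : ℝ, 0 ≤ lam → lam < L → ∀ x ∈ Set.Icc c (1:ℝ),
      0 < 1 - η - lam * (x - c) := by
    intro lam hl0 hlL x hx
    have hlt : lam * (1 - c) < 1 - η := (lt_div_iff₀ h1c).mp hlL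
    nlinarith [mul_le_mul_of_nonneg_left (by linarith [hx.2] : x - c ≤ 1 - c) hl0]
  -- interval integrability of the full integrand on each piece
  have hInt1 : ∀ lam : ℝ, 0 ≤ lam → IntervalIntegrable
      (fun v => (v - c) / (1 - η * Real.sign (v - c) - lam * (v - c)))
      MeasureTheory.volume (-1) c := by
    intro lam hl0
    apply ContinuousOn.intervalIntegrable
    apply ContinuousOn.congr (s := Set.uIcc (-1:ℝ) c)
      (f := fun v => (v - c) / (1 + η - lam * (v - c)))
    · apply ContinuousOn.div
      · fun_prop
      · fun_prop
      · intro x hx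
        rw [Set.uIcc_of_le (by linarith)] at hx
        exact (hpos1 lam hl0 x hx).ne'
    · exact hcong1 lam
  have hInt2 : ∀ lam : ℝ, 0 ≤ lam → lam < L → IntervalIntegrable
      (fun v => (v - c) / (1 - η * Real.sign (v - c) - lam * (v - c)))
      MeasureTheory.volume c 1 := by
    intro lam hl0 hlL
    apply ContinuousOn.intervalIntegrable
    apply ContinuousOn.congr (s := Set.uIcc c (1:ℝ))
      (f := fun v => (v - c) / (1 - η - lam * (v - c)))
    · apply ContinuousOn.div
      · fun_prop
      · fun_prop
      · intro x hx
        rw [Set.uIcc_of_le (by linarith)] at hx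
        exact (hpos2 lam hl0 hlL x hx).ne'
    · exact hcong2 lam
  -- closed form
  have key : ∀ lam : ℝ, 0 < lam → lam < L →
      g lam
      = (-(1+c)/lam + ((1+η)/lam^2) * (Real.log (1+η+lam*(1+c)) - Real.log (1+η)))
        + (-(1-c)/lam + ((1-η)/lam^2) * (Real.log (1-η) - Real.log (1-η-lam*(1-c)))) := by
    intro lam hl0 hlL
    rw [hg lam]
    rw [← intervalIntegral.integral_add_adjacent_intervals
      (hInt1 lam hl0.le) (hInt2 lam hl0.le hlL)]
    rw [intervalIntegral.integral_congr (hcong1 lam),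
        intervalIntegral.integral_congr (hcong2 lam)]
    rw [aux_decay_piece (1+η) lam c (-1) c hl0.ne' (by linarith) (hpos1 lam hl0.le),
        aux_decay_piece (1-η) lam c c 1 hl0.ne' (by linarith) (hpos2 lam hl0.le hlL)]
    rw [show (1+η - lam*(c - c) : ℝ) = 1+η by ring,
        show (1-η - lam*(c - c) : ℝ) = 1-η by ring,
        show (1+η - lam*((-1) - c) : ℝ) = 1+η+lam*(1+c) by ring]
    ring
  -- basic nonvanishing facts at points of (0, L]
  have hargpos : ∀ x : ℝ, 0 < x → (0:ℝ) < 1+η+x*(1+c) := by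
    intro x hx; nlinarith [mul_pos hx h1c']
  -- g 0 < 0
  have hg0 : g 0 < 0 := by
    rw [hg 0]
    simpa using hflux
  -- the blow-up of g at L⁻
  have htendg : Tendsto g (nhdsWithin L (Set.Iio L)) atTop := by
    have hLne : L ≠ 0 := hL.ne'
    have hL2 : (L:ℝ)^2 ≠ 0 := pow_ne_zero 2 hLne
    have harg1 : (1+η+L*(1+c)) ≠ 0 := (hargpos L hL).ne'
    have hzero : 1-η-L*(1-c) = 0 := by
      rw [hLdef]; field_simp; ring
    have hsq : ContinuousAt (fun lam : ℝ => lam^2) L := by fun_prop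
    have hsqne : (fun lam : ℝ => lam^2) L ≠ 0 := hL2
    have hl1 : ContinuousAt (fun lam : ℝ => Real.log (1+η+lam*(1+c))) L := by
      have h1 : ContinuousAt (fun lam : ℝ => 1+η+lam*(1+c)) L := by fun_prop
      exact ContinuousAt.comp (x := L) (g := Real.log)
        (Real.continuousAt_log harg1) h1
    have hAcont : ContinuousAt (fun lam : ℝ =>
        -(1+c)/lam + ((1+η)/lam^2) * (Real.log (1+η+lam*(1+c)) - Real.log (1+η))
        + (-(1-c)/lam + ((1-η)/lam^2) * Real.log (1-η))) L := by
      exact ((continuousAt_const.div continuousAt_id hLne).add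
        ((continuousAt_const.div hsq hsqne).mul (hl1.sub continuousAt_const))).add
        ((continuousAt_const.div continuousAt_id hLne).add
        ((continuousAt_const.div hsq hsqne).mul continuousAt_const))
    have hA : Tendsto (fun lam : ℝ =>
        -(1+c)/lam + ((1+η)/lam^2) * (Real.log (1+η+lam*(1+c)) - Real.log (1+η))
        + (-(1-c)/lam + ((1-η)/lam^2) * Real.log (1-η)))
        (nhdsWithin L (Set.Iio L)) (nhds _) :=
      (hAcont.tendsto).mono_left nhdsWithin_le_nhds
    have hd : Tendsto (fun lam : ℝ => 1-η-lam*(1-c)) (nhdsWithin L (Set.Iio L))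
        (nhdsWithin 0 (Set.Ioi 0)) := by
      rw [tendsto_nhdsWithin_iff]
      constructor
      · have hcont : Tendsto (fun lam : ℝ => 1-η-lam*(1-c)) (nhds L) (nhds (1-η-L*(1-c))) :=
          ((by fun_prop : Continuous (fun lam : ℝ => 1-η-lam*(1-c))).tendsto L)
        rw [hzero] at hcont
        exact hcont.mono_left nhdsWithin_le_nhds
      · filter_upwards [self_mem_nhdsWithin] with x hx
        have hxL : x < L := hx
        have : x * (1-c) < 1 - η := by
          have := (lt_div_iff₀ h1c).mp hxL
          linarith
        exact Set.mem_Ioi.mpr (by linarith)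
    have hlog : Tendsto (fun lam : ℝ => Real.log (1-η-lam*(1-c)))
        (nhdsWithin L (Set.Iio L)) atBot :=
      Real.tendsto_log_nhdsGT_zero.comp hd
    have hneg : Tendsto (fun lam : ℝ => -Real.log (1-η-lam*(1-c)))
        (nhdsWithin L (Set.Iio L)) atTop := tendsto_neg_atBot_atTop.comp hlog
    have hcoef : Tendsto (fun lam : ℝ => (1-η)/lam^2) (nhdsWithin L (Set.Iio L))
        (nhds ((1-η)/L^2)) :=
      ((continuousAt_const.div hsq hsqne).tendsto).mono_left nhdsWithin_le_nhds
    have hB : Tendsto (fun lam : ℝ => ((1-η)/lam^2) * (-Real.log (1-η-lam*(1-c))))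
        (nhdsWithin L (Set.Iio L)) atTop :=
      hcoef.pos_mul_atTop (div_pos h1η (pow_pos hL 2)) hneg
    have hG := (hA.add_atTop hB).congr (f₂ := fun lam : ℝ =>
      (-(1+c)/lam + ((1+η)/lam^2) * (Real.log (1+η+lam*(1+c)) - Real.log (1+η)))
        + (-(1-c)/lam + ((1-η)/lam^2) * (Real.log (1-η) - Real.log (1-η-lam*(1-c)))))
      (fun lam => by ring)
    refine hG.congr' ?_
    have hmem : Set.Ioo (0:ℝ) L ∈ nhdsWithin L (Set.Iio L) :=
      Ioo_mem_nhdsLT_of_mem ⟨hL, le_refl L⟩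
    filter_upwards [hmem] with x hx
    exact (key x hx.1 hx.2).symm
  -- continuity of g on (0, L)
  have hgcont : ∀ x ∈ Set.Ioo (0:ℝ) L, ContinuousAt g x := by
    intro x hx
    have hxne : x ≠ 0 := hx.1.ne'
    have hx2 : (fun lam : ℝ => lam^2) x ≠ 0 := pow_ne_zero 2 hxne
    have harg1 : (1+η+x*(1+c)) ≠ 0 := (hargpos x hx.1).ne'
    have harg2 : (1-η-x*(1-c)) ≠ 0 := by
      have : x * (1-c) < 1 - η := by
        have := (lt_div_iff₀ h1c).mp hx.2; linarith
      exact (by linarith : (0:ℝ) < 1-η-x*(1-c)).ne'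
    have hsq : ContinuousAt (fun lam : ℝ => lam^2) x := by fun_prop
    have hl1 : ContinuousAt (fun lam : ℝ => Real.log (1+η+lam*(1+c))) x := by
      have h1 : ContinuousAt (fun lam : ℝ => 1+η+lam*(1+c)) x := by fun_prop
      exact ContinuousAt.comp (x := x) (g := Real.log) (Real.continuousAt_log harg1) h1
    have hl2 : ContinuousAt (fun lam : ℝ => Real.log (1-η-lam*(1-c))) x := by
      have h2 : ContinuousAt (fun lam : ℝ => 1-η-lam*(1-c)) x := by fun_prop
      exact ContinuousAt.comp (x := x) (g := Real.log) (Real.continuousAt_log harg2) h2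
    have hGc : ContinuousAt (fun lam : ℝ =>
        (-(1+c)/lam + ((1+η)/lam^2) * (Real.log (1+η+lam*(1+c)) - Real.log (1+η)))
        + (-(1-c)/lam + ((1-η)/lam^2) * (Real.log (1-η) - Real.log (1-η-lam*(1-c))))) x := by
      exact ((continuousAt_const.div continuousAt_id hxne).add
        ((continuousAt_const.div hsq hx2).mul (hl1.sub continuousAt_const))).add
        ((continuousAt_const.div continuousAt_id hxne).add
        ((continuousAt_const.div hsq hx2).mul (continuousAt_const.sub hl2)))
    apply hGc.congr
    filter_upwards [isOpen_Ioo.mem_nhds hx] with y hy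
    exact (key y hy.1 hy.2).symm
  -- quantitative upper bound near 0
  have hbound : ∀ lam : ℝ, 0 ≤ lam → lam ≤ L/2 →
      g lam ≤ g 0 + 16 * lam / (1-η)^2 := by
    intro lam hl0 hlL2
    have hlL : lam < L := by linarith
    have hIl : IntervalIntegrable
        (fun v => (v - c) / (1 - η * Real.sign (v - c) - lam * (v - c)))
        MeasureTheory.volume (-1) 1 := (hInt1 lam hl0).trans (hInt2 lam hl0 hlL)
    have hI0 : IntervalIntegrable
        (fun v => (v - c) / (1 - η * Real.sign (v - c) - 0 * (v - c)))
        MeasureTheory.volume (-1) 1 := (hInt1 0 le_rfl).trans (hInt2 0 le_rfl hL)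
    have hpoint : ∀ v ∈ Set.Icc (-1:ℝ) 1,
        (v - c) / (1 - η * Real.sign (v - c) - lam * (v - c)) ≤
        (v - c) / (1 - η * Real.sign (v - c) - 0 * (v - c)) + 8 * lam / (1-η)^2 := by
      intro v hv
      by_cases hvc : v = c
      · subst hvc
        simp only [sub_self, zero_div, Real.sign_zero]
        have : (0:ℝ) ≤ 8 * lam / (1-η)^2 := by positivity
        simpa using this
      · have hw2 : (v-c)^2 ≤ 4 := by nlinarith [hv.1, hv.2]
        have hDl : 0 < 1 - η * Real.sign (v - c) - lam * (v - c) :=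
          hposIcc lam hl0 hlL v hv hvc
        have hD0 : 0 < 1 - η * Real.sign (v - c) - 0 * (v - c) :=
          hposIcc 0 le_rfl hL v hv hvc
        have hdiff := aux_decay_algebra (v-c) (1 - η * Real.sign (v - c)) lam hDl hD0
        have hDlD0 : (1-η)/2 * (1-η) ≤
            (1 - η * Real.sign (v - c) - lam * (v - c)) *
            (1 - η * Real.sign (v - c) - 0 * (v - c)) := by
          rcases lt_or_gt_of_ne hvc with h | h
          · rw [Real.sign_of_neg (by linarith : v - c < 0)]
            have h1 : lam * (v - c) ≤ 0 :=
              mul_nonpos_of_nonneg_of_nonpos hl0 (by linarith)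
            nlinarith
          · rw [Real.sign_of_pos (by linarith : (0:ℝ) < v - c)]
            have hle : lam * (v - c) ≤ lam * (1 - c) :=
              mul_le_mul_of_nonneg_left (by linarith [hv.2] : v - c ≤ 1 - c) hl0
            have hhalf : lam * (1 - c) ≤ (1 - η)/2 := by
              have hL1c : L * (1 - c) = 1 - η := div_mul_cancel₀ _ h1c.ne'
              nlinarith [mul_le_mul_of_nonneg_right hlL2 h1c.le]
            nlinarith
        have hfrac : lam * (v-c)^2 /
              ((1 - η * Real.sign (v - c) - lam * (v - c)) *
               (1 - η * Real.sign (v - c) - 0 * (v - c))) ≤ 8 * lam / (1-η)^2 := by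
          rw [div_le_div_iff₀ (by positivity) (by positivity)]
          have hnum : (v-c)^2 * (lam * (1-η)^2) ≤ 4 * (lam * (1-η)^2) :=
            mul_le_mul_of_nonneg_right hw2 (by positivity)
          have hk := mul_le_mul_of_nonneg_left hDlD0 (by linarith : (0:ℝ) ≤ 8 * lam)
          linarith [hnum, hk]
        linarith
    have hmono := intervalIntegral.integral_mono_on (by norm_num : (-1:ℝ) ≤ 1)
      hIl (hI0.add intervalIntegrable_const) hpoint
    rw [intervalIntegral.integral_add hI0 intervalIntegrable_const,
        intervalIntegral.integral_const] at hmono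
    have hgl : g lam = ∫ v in (-1:ℝ)..1,
        (v - c) / (1 - η * Real.sign (v - c) - lam * (v - c)) := hg lam
    have hg0' : g 0 = ∫ v in (-1:ℝ)..1,
        (v - c) / (1 - η * Real.sign (v - c) - 0 * (v - c)) := by
      rw [hg 0]
    rw [hgl, hg0']
    have : ((1:ℝ) - (-1)) • (8 * lam / (1-η)^2) = 16 * lam / (1-η)^2 := by
      rw [smul_eq_mul]; ring
    linarith [hmono, this ▸ hmono]
  -- assemble
  refine ⟨?_, hg0, htendg, ?_⟩
  · intro lam hlam v hv hvc
    exact hposIcc lam hlam.1 hlam.2 v ⟨hv.1.le, hv.2.le⟩ hvc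
  · -- smallest zero
    set lam0 := min (L/2) ((-(g 0)) * (1-η)^2 / 32) with hlam0def
    have hg0pos : 0 < -(g 0) := by linarith
    have hlam0pos : 0 < lam0 := by
      apply lt_min (by linarith)
      positivity
    have hlam0le : lam0 ≤ L/2 := min_le_left _ _
    have hlam0L : lam0 < L := by linarith
    have hneg : ∀ μ : ℝ, 0 ≤ μ → μ ≤ lam0 → g μ < 0 := by
      intro μ hμ0 hμ1
      have hb := hbound μ hμ0 (le_trans hμ1 hlam0le)
      have h2 : μ ≤ (-(g 0)) * (1-η)^2 / 32 := le_trans hμ1 (min_le_right _ _)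
      rw [le_div_iff₀ (by norm_num : (0:ℝ) < 32)] at h2
      have h3 : 16 * μ / (1-η)^2 ≤ -(g 0)/2 := by
        rw [div_le_div_iff₀ (by positivity) (by norm_num : (0:ℝ) < 2)]
        nlinarith
      linarith
    have hglam0 : g lam0 < 0 := hneg lam0 hlam0pos.le le_rfl
    -- find a point where g is positive
    have hev1 : ∀ᶠ x in nhdsWithin L (Set.Iio L), 1 ≤ g x :=
      htendg.eventually_ge_atTop 1
    have hev2 : Set.Ioo lam0 L ∈ nhdsWithin L (Set.Iio L) :=
      Ioo_mem_nhdsLT_of_mem ⟨hlam0L, le_refl L⟩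
    obtain ⟨lam1, hglam1, hlam1mem⟩ := (hev1.and (eventually_mem_set.mpr hev2)).exists
    have hlam1L : lam1 < L := hlam1mem.2
    have hlam01 : lam0 < lam1 := hlam1mem.1
    -- IVT on [lam0, lam1]
    have hco : ContinuousOn g (Set.Icc lam0 lam1) := by
      intro x hx
      exact (hgcont x ⟨lt_of_lt_of_le hlam0pos hx.1, lt_of_le_of_lt hx.2 hlam1L⟩).continuousWithinAt
    have h0mem : (0:ℝ) ∈ Set.Icc (g lam0) (g lam1) := ⟨hglam0.le, by linarith⟩
    obtain ⟨z, hzmem, hz0⟩ := intermediate_value_Icc hlam01.le hco h0mem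
    have hzlam0 : lam0 < z := by
      rcases eq_or_lt_of_le hzmem.1 with h | h
      · exfalso; rw [← h] at hz0; linarith
      · exact h
    have hzL : z < L := lt_of_le_of_lt hzmem.2 hlam1L
    -- the set of zeros
    set Z := {μ : ℝ | μ ∈ Set.Ioo (0:ℝ) L ∧ g μ = 0} with hZdef
    have hzZ : z ∈ Z := ⟨⟨by linarith, hzL⟩, hz0⟩
    have hZne : Z.Nonempty := ⟨z, hzZ⟩
    have hZlb : ∀ μ ∈ Z, lam0 < μ := by
      intro μ hμ
      by_contra hcon
      push_neg at hcon
      have := hneg μ hμ.1.1.le hcon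
      rw [hμ.2] at this
      exact lt_irrefl 0 this
    have hbdd : BddBelow Z := ⟨lam0, fun μ hμ => (hZlb μ hμ).le⟩
    set m := sInf Z with hmdef
    have hmlb : lam0 ≤ m := le_csInf hZne (fun μ hμ => (hZlb μ hμ).le)
    have hmub : m ≤ z := csInf_le hbdd hzZ
    have hmmem : m ∈ Set.Ioo (0:ℝ) L := ⟨lt_of_lt_of_le hlam0pos hmlb, lt_of_le_of_lt hmub hzL⟩
    have hgm : g m = 0 := by
      have hclos : m ∈ closure Z := csInf_mem_closure hZne hbdd
      have hnb : (nhdsWithin m Z).NeBot := mem_closure_iff_nhdsWithin_neBot.mp hclos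
      have h1 : Tendsto g (nhdsWithin m Z) (nhds (g m)) :=
        (hgcont m hmmem).continuousWithinAt
      have h2 : Tendsto g (nhdsWithin m Z) (nhds 0) := by
        refine Tendsto.congr' ?_ tendsto_const_nhds
        filter_upwards [self_mem_nhdsWithin] with x hx
        exact hx.2.symm
      exact tendsto_nhds_unique h1 h2
    exact ⟨m, hmmem, hgm, fun μ hμ hgμ => csInf_le hbdd ⟨hμ, hgμ⟩⟩
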